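/- arXiv:2507.18963 — 2 statements merged into one kernel-verified Lean document; each statement's English description precedes it below -/
import Mathlib

section
/- Let R be a commutative ring that is an algebra over ℂ, let n ≥ 1, and let λ₁, …, λₙ be pairwise distinct complex numbers. Let A be a lower triangular n×n matrix over R whose i-th diagonal entry equals λᵢ·1_R for each i. Then there exists a lower unitriangular n×n matrix K over R (which is automatically invertible) such that A = K·Λ·K⁻¹, where Λ is the diagonal matrix with diagonal entries λ₁·1_R, …, λₙ·1_R. -/
open Matrix

/-- Lower triangular with all diagonal entries `1`. -/
def IsLowerUnitriangular {R : Type*} [CommRing R] {n : ℕ}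
    (A : Matrix (Fin n) (Fin n) R) : Prop :=
  (∀ i, A i i = 1) ∧ ∀ i j : Fin n, i < j → A i j = 0

noncomputable def Kaux {R : Type*} [CommRing R] [Algebra ℂ R] {n : ℕ}
    (lam : Fin n → ℂ) (A : Matrix (Fin n) (Fin n) R) (i j : Fin n) : R :=
  if h : j < i then
    algebraMap ℂ R ((lam j - lam i)⁻¹) *
      ∑ k ∈ (Finset.Ico j i).attach, A i k.1 * Kaux lam A k.1 j
  else if i = j then 1 else 0
termination_by i.1
decreasing_by exact (Finset.mem_Ico.mp k.2).2

theorem stmt3 {R : Type*} [CommRing R] [Algebra ℂ R] {n : ℕ} (hn : 1 ≤ n)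
    (lam : Fin n → ℂ) (hlam : Function.Injective lam)
    (A : Matrix (Fin n) (Fin n) R)
    (hAtri : ∀ i j : Fin n, i < j → A i j = 0)
    (hAdiag : ∀ i, A i i = algebraMap ℂ R (lam i)) :
    ∃ K : Matrix (Fin n) (Fin n) R, IsLowerUnitriangular K ∧
      A = K * Matrix.diagonal (fun i => algebraMap ℂ R (lam i)) * K⁻¹ := by
  set K : Matrix (Fin n) (Fin n) R := fun i j => Kaux lam A i j with hK
  have hKdiag : ∀ i, K i i = 1 := by
    intro i
    show Kaux lam A i i = 1
    rw [Kaux.eq_def]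
    simp [lt_irrefl]
  have hKtri : ∀ i j : Fin n, i < j → K i j = 0 := by
    intro i j hij
    show Kaux lam A i j = 0
    rw [Kaux.eq_def]
    simp [not_lt.mpr hij.le, hij.ne]
  -- the key identity: A * K = K * Λ
  have hmul : A * K = K * Matrix.diagonal (fun i => algebraMap ℂ R (lam i)) := by
    ext i j
    rw [Matrix.mul_apply, Matrix.mul_diagonal]
    rcases lt_trichotomy i j with hij | hij | hij
    · -- i < j : both sides 0
      rw [hKtri i j hij, zero_mul]
      apply Finset.sum_eq_zero
      intro k _
      rcases le_or_gt k i with hk | hk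
      · rw [hKtri k j (lt_of_le_of_lt hk hij), mul_zero]
      · rw [hAtri i k hk, zero_mul]
    · subst hij
      rw [hKdiag i, one_mul]
      rw [Finset.sum_eq_single i (fun k _ hk => by
        rcases lt_or_gt_of_ne hk with h | h
        · rw [hKtri k i h, mul_zero]
        · rw [hAtri i k h, zero_mul]) (by simp)]
      rw [hKdiag i, mul_one, hAdiag i]
    · -- j < i
      have hsplit : (Finset.univ : Finset (Fin n)) =
          (Finset.Icc j i) ∪ (Finset.univ \ Finset.Icc j i) := by
        simp
      have hKij : K i j = algebraMap ℂ R ((lam j - lam i)⁻¹) *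
          ∑ k ∈ (Finset.Ico j i).attach, A i k.1 * K k.1 j := by
        show Kaux lam A i j = _
        rw [Kaux.eq_def]; simp [hij]; rfl
      have hsum : ∑ k, A i k * K k j =
          A i i * K i j + ∑ k ∈ (Finset.Ico j i).attach, A i k.1 * K k.1 j := by
        have h1 : ∑ k ∈ Finset.Icc j i, (A i k * K k j) = ∑ k, A i k * K k j :=
          Finset.sum_subset (Finset.subset_univ _) (fun k _ hk => by
            rw [Finset.mem_Icc, not_and_or, not_le, not_le] at hk
            rcases hk with h | h
            · rw [hKtri k j h, mul_zero]
            · rw [hAtri i k h, zero_mul])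
        rw [← h1, show Finset.Icc j i = insert i (Finset.Ico j i) from
            (Finset.Ico_insert_right hij.le).symm,
          Finset.sum_insert (by simp),
          Finset.sum_attach (Finset.Ico j i) (fun k => A i k * K k j)]
      rw [hsum, hAdiag i, hKij]
      have hunit : algebraMap ℂ R (lam i) * (algebraMap ℂ R ((lam j - lam i)⁻¹)) +
          algebraMap ℂ R (lam j - lam i) * algebraMap ℂ R ((lam j - lam i)⁻¹) =
          algebraMap ℂ R (lam j) * algebraMap ℂ R ((lam j - lam i)⁻¹) := by
        rw [← _root_.map_mul, ← _root_.map_mul, ← _root_.map_mul, ← map_add]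
        congr 1
        ring
      have hne : lam j - lam i ≠ 0 := sub_ne_zero.mpr (fun h => hij.ne (hlam h))
      have h1 : algebraMap ℂ R (lam j - lam i) * algebraMap ℂ R ((lam j - lam i)⁻¹) = 1 := by
        rw [← _root_.map_mul, mul_inv_cancel₀ hne, _root_.map_one]
      set S := ∑ k ∈ (Finset.Ico j i).attach, A i k.1 * K k.1 j with hS
      calc algebraMap ℂ R (lam i) * (algebraMap ℂ R ((lam j - lam i)⁻¹) * S) + S
          = (algebraMap ℂ R (lam i) * algebraMap ℂ R ((lam j - lam i)⁻¹)
            + algebraMap ℂ R (lam j - lam i) * algebraMap ℂ R ((lam j - lam i)⁻¹)) * S := by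
            rw [h1]; ring
        _ = algebraMap ℂ R (lam j) * algebraMap ℂ R ((lam j - lam i)⁻¹) * S := by rw [hunit]
        _ = algebraMap ℂ R ((lam j - lam i)⁻¹) * S * algebraMap ℂ R (lam j) := by ring
  -- K is invertible since det K = 1
  have hdet : K.det = 1 := by
    rw [Matrix.det_of_lowerTriangular K (fun i j h => hKtri i j h)]
    simp [hKdiag]
  have hKunit : IsUnit K.det := by rw [hdet]; exact isUnit_one
  refine ⟨K, ⟨hKdiag, hKtri⟩, ?_⟩
  calc A = A * (K * K⁻¹) := by rw [Matrix.mul_nonsing_inv K hKunit, mul_one]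
    _ = (A * K) * K⁻¹ := by rw [mul_assoc]
    _ = K * Matrix.diagonal (fun i => algebraMap ℂ R (lam i)) * K⁻¹ := by rw [hmul]
end

section
/- Let R be a commutative ring, n ≥ 1, and let P denote the 2n×2n block matrix [[Iₙ, 0], [0, Lₙ]]. A 2n×2n matrix M over R is both upper unitriangular (upper triangular with all diagonal entries 1) and Ω̃-symplectic if and only if there exist an upper unitriangular n×n matrix A and a symmetric n×n matrix Z over R such that M = P·M⁺(A,Z)·P. -/
open Matrix

/-- `Lₙ`: the `n × n` matrix with `1` along the skew-diagonal
(`(Lₙ)ᵢⱼ = 1` iff `i + j = n + 1` in 1-based indexing). -/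
def Lmat {R : Type*} [CommRing R] (n : ℕ) : Matrix (Fin n) (Fin n) R :=
  Matrix.of fun i j : Fin n => if (i : ℕ) + (j : ℕ) = n - 1 then 1 else 0

/-- The symplectic form `Ω̃ = [[0, Lₙ], [−Lₙ, 0]]`. -/
def OmegaTilde {R : Type*} [CommRing R] (n : ℕ) :
    Matrix (Fin n ⊕ Fin n) (Fin n ⊕ Fin n) R :=
  Matrix.fromBlocks 0 (Lmat n) (-(Lmat n)) 0

/-- The block matrix `P = [[Iₙ, 0], [0, Lₙ]]`. -/
def Pmat {R : Type*} [CommRing R] (n : ℕ) :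
    Matrix (Fin n ⊕ Fin n) (Fin n ⊕ Fin n) R :=
  Matrix.fromBlocks 1 0 0 (Lmat n)

/-- `M⁺(A,Z) = [[Iₙ,Z],[0,Iₙ]]·[[A⁻¹,0],[0,Aᵀ]]`. -/
noncomputable def MposAZ {R : Type*} [CommRing R] {n : ℕ}
    (A Z : Matrix (Fin n) (Fin n) R) :
    Matrix (Fin n ⊕ Fin n) (Fin n ⊕ Fin n) R :=
  Matrix.fromBlocks 1 Z 0 1 * Matrix.fromBlocks A⁻¹ 0 0 Aᵀ

/-- Upper triangular with all diagonal entries `1` (for `n × n` matrices). -/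
def IsUpperUnitriangular {R : Type*} [CommRing R] {n : ℕ}
    (A : Matrix (Fin n) (Fin n) R) : Prop :=
  (∀ i, A i i = 1) ∧ ∀ i j : Fin n, j < i → A i j = 0

/-- The position (0-based) of an index of a `2n × 2n` matrix written in block form. -/
def idx {n : ℕ} : Fin n ⊕ Fin n → ℕ := Sum.elim (fun i => (i : ℕ)) fun i => n + (i : ℕ)

/-- Upper triangular with all diagonal entries `1` (for `2n × 2n` matrices in block form). -/
def IsUpperUnitriangular2n {R : Type*} [CommRing R] {n : ℕ}
    (M : Matrix (Fin n ⊕ Fin n) (Fin n ⊕ Fin n) R) : Prop :=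
  (∀ i, M i i = 1) ∧ ∀ i j : Fin n ⊕ Fin n, idx j < idx i → M i j = 0

section Aux

variable {R : Type*} [CommRing R] {n : ℕ}

private lemma mcl {α : Type*} [Monoid α] {x y : α} (h : x * y = 1) (z : α) :
    x * (y * z) = z := by rw [← mul_assoc, h, one_mul]

lemma Lmat_apply (i j : Fin n) : Lmat (R:=R) n i j = if j = Fin.rev i then 1 else 0 := by
  have h : ((i:ℕ) + (j:ℕ) = n - 1) ↔ j = Fin.rev i := by
    rw [Fin.ext_iff, Fin.val_rev]
    have := i.isLt; have := j.isLt
    omega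
  simp [Lmat, h]

lemma Lmat_apply' (i j : Fin n) : Lmat (R:=R) n i j = if i = Fin.rev j then 1 else 0 := by
  have h : ((i:ℕ) + (j:ℕ) = n - 1) ↔ i = Fin.rev j := by
    rw [Fin.ext_iff, Fin.val_rev]
    have := i.isLt; have := j.isLt
    omega
  simp [Lmat, h]

lemma Lmat_mul (X : Matrix (Fin n) (Fin n) R) :
    Lmat n * X = X.submatrix Fin.rev id := by
  ext i j
  simp [mul_apply, Lmat_apply, ite_mul]

lemma mul_Lmat (X : Matrix (Fin n) (Fin n) R) :
    X * Lmat n = X.submatrix id Fin.rev := by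
  ext i j
  simp [mul_apply, Lmat_apply', mul_ite]

lemma Lmat_sq : Lmat (R:=R) n * Lmat n = 1 := by
  ext i j
  simp [Lmat_mul, Lmat_apply, one_apply, Fin.rev_rev, eq_comm]

lemma Lmat_transpose : (Lmat (R:=R) n)ᵀ = Lmat n := by
  ext i j
  simp [Lmat, transpose_apply, add_comm]

lemma conj_apply (X : Matrix (Fin n) (Fin n) R) (i j : Fin n) :
    ((Lmat n * X * Lmat n : Matrix (Fin n) (Fin n) R)) i j = X (Fin.rev i) (Fin.rev j) := by
  rw [mul_Lmat, Lmat_mul]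
  rfl

variable {A B : Matrix (Fin n) (Fin n) R}

lemma IsUpperUnitriangular.blockTriangular (h : IsUpperUnitriangular A) :
    A.BlockTriangular id := fun _ _ hij => h.2 _ _ hij

lemma IsUpperUnitriangular.det_eq_one (h : IsUpperUnitriangular A) : A.det = 1 := by
  rw [Matrix.det_of_upperTriangular h.blockTriangular]
  simp [h.1]

lemma IsUpperUnitriangular.isUnit_det (h : IsUpperUnitriangular A) : IsUnit A.det := by
  rw [h.det_eq_one]; exact isUnit_one

lemma IsUpperUnitriangular.inv (h : IsUpperUnitriangular A) : IsUpperUnitriangular A⁻¹ := by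
  have hd := h.isUnit_det
  have : Invertible A := A.invertibleOfIsUnitDet hd
  have hbt : A⁻¹.BlockTriangular id :=
    Matrix.blockTriangular_inv_of_blockTriangular h.blockTriangular
  refine ⟨fun i => ?_, fun i j hij => hbt hij⟩
  have h1 : (A⁻¹ * A) i i = 1 := by rw [Matrix.nonsing_inv_mul _ hd, Matrix.one_apply_eq]
  rw [mul_apply, Finset.sum_eq_single i] at h1
  · rwa [h.1 i, mul_one] at h1
  · intro k _ hk
    rcases lt_or_gt_of_ne hk with hlt | hgt
    · rw [hbt (show id k < id i from hlt), zero_mul]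
    · rw [h.2 k i hgt, mul_zero]
  · intro hi; exact absurd (Finset.mem_univ i) hi

lemma IsUpperUnitriangular.conj (h : IsUpperUnitriangular A) :
    IsUpperUnitriangular (Lmat n * Aᵀ * Lmat n) := by
  constructor
  · intro i
    rw [conj_apply, transpose_apply]
    exact h.1 _
  · intro i j hij
    rw [conj_apply, transpose_apply]
    exact h.2 _ _ (by rwa [Fin.rev_lt_rev])

lemma unitri2n_fromBlocks {B C D : Matrix (Fin n) (Fin n) R}
    (hB : IsUpperUnitriangular B) (hD : IsUpperUnitriangular D) :
    IsUpperUnitriangular2n (Matrix.fromBlocks B C 0 D) := by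
  constructor
  · rintro (i | i)
    · exact hB.1 i
    · exact hD.1 i
  · rintro (i | i) (j | j) hij <;> simp only [idx, Sum.elim_inl, Sum.elim_inr] at hij
    · exact hB.2 i j (by exact_mod_cast hij)
    · exact absurd hij (by have := i.isLt; omega)
    · rfl
    · exact hD.2 i j (by simpa using Nat.lt_of_add_lt_add_left hij)

lemma PMP (A Z : Matrix (Fin n) (Fin n) R) :
    Pmat n * MposAZ A Z * Pmat n =
      Matrix.fromBlocks A⁻¹ (Z * Aᵀ * Lmat n) 0 (Lmat n * Aᵀ * Lmat n) := by
  simp only [Pmat, MposAZ, Matrix.fromBlocks_multiply, Matrix.mul_one, Matrix.one_mul,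
    Matrix.mul_zero, Matrix.zero_mul, add_zero, zero_add, Matrix.mul_assoc]

end Aux

theorem stmt13 {R : Type*} [CommRing R] {n : ℕ} (hn : 1 ≤ n)
    (M : Matrix (Fin n ⊕ Fin n) (Fin n ⊕ Fin n) R) :
    (IsUpperUnitriangular2n M ∧ Mᵀ * OmegaTilde n * M = OmegaTilde n) ↔
      ∃ A Z : Matrix (Fin n) (Fin n) R, IsUpperUnitriangular A ∧ Z.IsSymm ∧
        M = Pmat n * MposAZ A Z * Pmat n := by
  constructor
  · rintro ⟨h1, h2⟩
    set B := M.toBlocks₁₁ with hBdef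
    set C := M.toBlocks₁₂ with hCdef
    set D := M.toBlocks₂₂ with hDdef
    have hE : M.toBlocks₂₁ = 0 := by
      ext i j
      exact h1.2 (Sum.inr i) (Sum.inl j) (by simp [idx]; omega)
    have hM : M = Matrix.fromBlocks B C 0 D := by
      rw [← hE, hBdef, hCdef, hDdef, Matrix.fromBlocks_toBlocks]
    have hB : IsUpperUnitriangular B := by
      constructor
      · intro i; exact h1.1 (Sum.inl i)
      · intro i j hij
        exact h1.2 (Sum.inl i) (Sum.inl j) (by simpa [idx] using (Fin.lt_def.mp hij))
    have hD : IsUpperUnitriangular D := by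
      constructor
      · intro i; exact h1.1 (Sum.inr i)
      · intro i j hij
        exact h1.2 (Sum.inr i) (Sum.inr j) (by simp [idx]; exact Fin.lt_def.mp hij)
    have hBd := hB.isUnit_det
    set A := B⁻¹ with hAdef
    have hA : IsUpperUnitriangular A := hB.inv
    have hBA : B * A = 1 := Matrix.mul_nonsing_inv B hBd
    have hAB : A * B = 1 := Matrix.nonsing_inv_mul B hBd
    have hABt : Aᵀ * Bᵀ = 1 := by rw [← Matrix.transpose_mul, hBA, Matrix.transpose_one]
    have hBAt : Bᵀ * Aᵀ = 1 := by rw [← Matrix.transpose_mul, hAB, Matrix.transpose_one]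
    -- extract the block equations from the symplectic condition
    rw [hM] at h2
    rw [OmegaTilde, Matrix.fromBlocks_transpose, Matrix.fromBlocks_multiply,
      Matrix.fromBlocks_multiply] at h2
    rw [Matrix.fromBlocks_inj] at h2
    simp only [Matrix.transpose_zero, Matrix.mul_zero, Matrix.zero_mul, Matrix.mul_neg,
      Matrix.neg_mul, add_zero, zero_add, neg_zero, Matrix.mul_assoc] at h2
    obtain ⟨e11, e12, e21, e22⟩ := h2
    have hLL : Lmat (R:=R) n * Lmat n = 1 := Lmat_sq
    have hLD : Lmat n * D = Aᵀ * Lmat n := by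
      have h3 := congrArg (fun X => Aᵀ * X) e12
      simpa only [mcl hABt] using h3
    have hD2 : D = Lmat n * (Aᵀ * Lmat n) := by
      rw [← hLD, mcl hLL]
    have e22' : Dᵀ * (Lmat n * C) = Cᵀ * (Lmat n * D) := neg_add_eq_zero.mp e22
    rw [hD2] at e22'
    simp only [Matrix.transpose_mul, Lmat_transpose, Matrix.transpose_transpose,
      Matrix.mul_assoc, mcl hLL] at e22'
    -- e22' : Lmat n * (A * C) = Cᵀ * (Aᵀ * Lmat n)
    have s1 : B * (Lmat n * (Cᵀ * (Aᵀ * Lmat n))) = C := by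
      rw [← e22', mcl hLL, mcl hBA]
    refine ⟨A, C * Lmat n * Bᵀ, hA, ?_, ?_⟩
    · have t := congrArg (fun X => X * (Lmat n * Bᵀ)) s1
      simp only [Matrix.mul_assoc, mcl hLL, hABt, Matrix.mul_one] at t
      show (C * Lmat n * Bᵀ)ᵀ = C * Lmat n * Bᵀ
      simpa only [Matrix.transpose_mul, Lmat_transpose, Matrix.transpose_transpose,
        Matrix.mul_assoc] using t
    · rw [PMP, hM]
      have hBinv : A⁻¹ = B := Matrix.nonsing_inv_nonsing_inv B hBd
      have hC : C * Lmat n * Bᵀ * Aᵀ * Lmat n = C := by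
        simp only [Matrix.mul_assoc, mcl hBAt, hLL, Matrix.mul_one]
      rw [hBinv, Matrix.fromBlocks_inj]
      exact ⟨rfl, hC.symm, rfl, by rw [hD2, Matrix.mul_assoc]⟩
  · rintro ⟨A, Z, hA, hZ, rfl⟩
    have hAd := hA.isUnit_det
    have hAAi : A * A⁻¹ = 1 := Matrix.mul_nonsing_inv A hAd
    have hAiA : A⁻¹ * A = 1 := Matrix.nonsing_inv_mul A hAd
    have hAt : Aᵀ * A⁻¹ᵀ = 1 := by rw [← Matrix.transpose_mul, hAiA, Matrix.transpose_one]
    have hAt' : A⁻¹ᵀ * Aᵀ = 1 := by rw [← Matrix.transpose_mul, hAAi, Matrix.transpose_one]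
    rw [PMP]
    refine ⟨unitri2n_fromBlocks hA.inv hA.conj, ?_⟩
    rw [OmegaTilde, Matrix.fromBlocks_transpose, Matrix.fromBlocks_multiply,
      Matrix.fromBlocks_multiply, Matrix.fromBlocks_inj]
    refine ⟨?_, ?_, ?_, ?_⟩ <;>
      simp only [Matrix.transpose_mul, Lmat_transpose, Matrix.transpose_zero,
        Matrix.transpose_transpose, Matrix.mul_zero, Matrix.zero_mul, Matrix.mul_neg,
        Matrix.neg_mul, add_zero, zero_add, neg_neg, Matrix.mul_assoc, mcl (Lmat_sq (R:=R) (n:=n)),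
        mcl hAt, mcl hAt', mcl hAAi, mcl hAiA, hAAi, hAiA, hZ.eq, neg_zero, Matrix.mul_one, neg_add_cancel, add_neg_cancel]
end
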